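/- Let p, q be complex numbers with Re(p) > 0, Re(q) > 0 and let a, b be real numbers with a, b > 1. For u ≥ 0 let m(u) denote the number of positive integers n with n + b ≤ e^u, i.e. m(u) = max(⌊e^u − b⌋, 0). Then for every complex z with |z| < 1, Φ_{p,q}(a,b;z) = (1+a)^p (1+b)^q · (z q/Γ(p)) ∫_0^∞ ∫_0^∞ e^{−q u} e^{−(a+1) v} v^{p−1} (1 − (z e^{−v})^{m(u)}) / (1 − z e^{−v}) du dv. -/

import Mathlib

open MeasureTheory
open Set Filter

/-- The generalized polylogarithm `Φ_{p,q}(a,b;z)`. -/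
noncomputable def genPolylog (p q : ℂ) (a b : ℝ) (z : ℂ) : ℂ :=
  ∑' k : ℕ, (((1 + a : ℝ) : ℂ) ^ p * ((1 + b : ℝ) : ℂ) ^ q /
      ((((k : ℝ) + 1 + a : ℝ) : ℂ) ^ p * (((k : ℝ) + 1 + b : ℝ) : ℂ) ^ q)) * z ^ (k + 1)

/-- `mCount b u` is the number of positive integers `n` with `n + b ≤ e^u`. -/
noncomputable def mCount (b : ℝ) (u : ℝ) : ℕ :=
  Set.ncard {n : ℕ | 0 < n ∧ (n : ℝ) + b ≤ Real.exp u}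

lemma mCount_eq (b u : ℝ) : mCount b u = (⌊Real.exp u - b⌋).toNat := by
  have hset : {n : ℕ | 0 < n ∧ (n : ℝ) + b ≤ Real.exp u}
      = ↑(Finset.Icc 1 (⌊Real.exp u - b⌋).toNat) := by
    ext n
    simp only [Set.mem_setOf_eq, Finset.coe_Icc, Set.mem_Icc]
    constructor
    · rintro ⟨h1, h2⟩
      refine ⟨h1, ?_⟩
      have h3 : (n : ℤ) ≤ ⌊Real.exp u - b⌋ := Int.le_floor.mpr (by push_cast; linarith)
      omega
    · rintro ⟨h1, h2⟩
      refine ⟨h1, ?_⟩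
      have h3 : (n : ℤ) ≤ ⌊Real.exp u - b⌋ := by omega
      have h4 := Int.le_floor.mp h3
      push_cast at h4
      linarith
  rw [mCount, hset, Set.ncard_coe_finset, Nat.card_Icc]
  omega

lemma lt_mCount_iff {b u : ℝ} {k : ℕ} : k < mCount b u ↔ (k : ℝ) + 1 + b ≤ Real.exp u := by
  rw [mCount_eq]
  constructor
  · intro h
    have h2 : (k : ℤ) + 1 ≤ ⌊Real.exp u - b⌋ := by omega
    have h4 := Int.le_floor.mp h2
    push_cast at h4
    linarith
  · intro h
    have h3 : (k : ℤ) + 1 ≤ ⌊Real.exp u - b⌋ := Int.le_floor.mpr (by push_cast; linarith)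
    omega


lemma integrableOn_cexp_neg {q : ℂ} (hq : 0 < q.re) (c : ℝ) :
    IntegrableOn (fun u : ℝ ↦ Complex.exp (-(q * u))) (Ioi c) := by
  have hnorm : ∀ u : ℝ, ‖Complex.exp (-(q * u))‖ = Real.exp (-q.re * u) := by
    intro u
    rw [Complex.norm_exp]
    congr 1
    simp [Complex.mul_re]
  refine (exp_neg_integrableOn_Ioi c hq).mono' ?_ ?_
  · refine (Continuous.aestronglyMeasurable ?_)
    exact Complex.continuous_exp.comp (by continuity)
  · filter_upwards with u
    rw [hnorm u]

lemma hasDerivAt_cexp_aux (q : ℂ) (hq : q ≠ 0) (x : ℝ) :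
    HasDerivAt (fun u : ℝ ↦ -Complex.exp (-(q * u)) / q) (Complex.exp (-(q * x))) x := by
  have h1 : HasDerivAt (fun w : ℂ ↦ -Complex.exp (-(q * w)) / q) (Complex.exp (-(q * x))) (x : ℂ) := by
    have h2 : HasDerivAt (fun w : ℂ ↦ -(q * w)) (-q) (x : ℂ) := by
      have := ((hasDerivAt_id (x : ℂ)).const_mul q).neg
      simp only [id, mul_one] at this
      exact this
    have h3 := (h2.cexp.neg).div_const q
    rw [show Complex.exp (-(q * x)) = -(Complex.exp (-(q * (x : ℂ))) * -q) / q by field_simp]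
    exact h3
  exact h1.comp_ofReal

lemma integral_cexp_neg {q : ℂ} (hq : 0 < q.re) (c : ℝ) :
    ∫ u in Ioi c, Complex.exp (-(q * u)) = Complex.exp (-(q * c)) / q := by
  have hq0 : q ≠ 0 := by
    intro h; rw [h] at hq; simp at hq
  have htend : Tendsto (fun u : ℝ ↦ -Complex.exp (-(q * u)) / q) atTop (nhds 0) := by
    rw [tendsto_zero_iff_norm_tendsto_zero]
    have : (fun u : ℝ ↦ ‖-Complex.exp (-(q * u)) / q‖)
        = fun u : ℝ ↦ Real.exp (-q.re * u) / ‖q‖ := by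
      ext u
      rw [norm_div, norm_neg, Complex.norm_exp]
      congr 2
      simp [Complex.mul_re]
    rw [this]
    have h0 : Tendsto (fun u : ℝ ↦ Real.exp (-q.re * u)) atTop (nhds 0) := by
      apply Real.tendsto_exp_atBot.comp
      exact tendsto_id.const_mul_atTop_of_neg (neg_neg_iff_pos.2 hq)
    simpa using h0.div_const ‖q‖
  have := integral_Ioi_of_hasDerivAt_of_tendsto
    (f := fun u : ℝ ↦ -Complex.exp (-(q * u)) / q)
    (f' := fun u : ℝ ↦ Complex.exp (-(q * u))) (a := c)
    ((hasDerivAt_cexp_aux q hq0 c).continuousAt.continuousWithinAt)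
    (fun x _ ↦ hasDerivAt_cexp_aux q hq0 x)
    (integrableOn_cexp_neg hq c) htend
  rw [this]
  ring

lemma integrableOn_cpow_mul_cexp {p : ℂ} (hp : 0 < p.re) {r : ℝ} (hr : 0 < r) :
    IntegrableOn (fun v : ℝ ↦ (v : ℂ) ^ (p - 1) * Complex.exp (-(r * v))) (Ioi 0) := by
  have h0 : IntegrableOn (fun x : ℝ ↦ ((Real.exp (-x) : ℝ) : ℂ) * (x : ℂ) ^ (p - 1)) (Ioi 0) :=
    Complex.GammaIntegral_convergent hp
  have h1 : IntegrableOn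
      (fun v : ℝ ↦ ((Real.exp (-(r * v)) : ℝ) : ℂ) * ((r * v : ℝ) : ℂ) ^ (p - 1)) (Ioi 0) := by
    have := (integrableOn_Ioi_comp_mul_left_iff
      (fun x : ℝ ↦ ((Real.exp (-x) : ℝ) : ℂ) * (x : ℂ) ^ (p - 1)) 0 hr).mpr
    simp only [mul_zero] at this
    exact this h0
  have h2 := h1.const_mul (((r : ℂ) ^ (p - 1))⁻¹)
  refine IntegrableOn.congr_fun h2 ?_ measurableSet_Ioi
  intro v hv
  have hrne : ((r : ℂ)) ^ (p - 1) ≠ 0 := by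
    rw [Ne, Complex.cpow_eq_zero_iff]
    push_neg
    intro h
    exact absurd (Complex.ofReal_eq_zero.mp h) hr.ne'
  simp only [Complex.ofReal_mul]
  rw [Complex.mul_cpow_ofReal_nonneg hr.le (le_of_lt hv), Complex.ofReal_exp]
  push_cast
  field_simp

lemma step_inner (p q : ℂ) (hq : 0 < q.re) (a b : ℝ) (ha : 1 < a) (hb : 1 < b)
    (z : ℂ) (hz : ‖z‖ < 1) (v : ℝ) (hv : v ∈ Ioi (0:ℝ)) :
    (∫ u in Ioi (0:ℝ),
        Complex.exp (-(q * u)) * Complex.exp (-(((a : ℂ) + 1) * v)) * (v : ℂ) ^ (p - 1) *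
          ((1 - (z * Complex.exp (-(v : ℂ))) ^ (mCount b u)) / (1 - z * Complex.exp (-(v : ℂ)))))
      = ∑' k : ℕ, z ^ k * (((k : ℝ) + 1 + b : ℝ) : ℂ) ^ (-q) / q *
          ((v : ℂ) ^ (p - 1) * Complex.exp (-((((k : ℝ) + 1 + a : ℝ) : ℂ) * (v : ℂ)))) := by
  rw [mem_Ioi] at hv
  set W : ℂ := z * Complex.exp (-(v : ℂ)) with hW
  have hWabs : ‖W‖ ≤ ‖z‖ := by
    rw [hW, norm_mul, Complex.norm_exp]
    calc ‖z‖ * Real.exp ((-(v : ℂ)).re)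
        ≤ ‖z‖ * 1 := by
          refine mul_le_mul_of_nonneg_left ?_ (norm_nonneg z)
          refine Real.exp_le_one_iff.mpr ?_
          simp [hv.le]
      _ = ‖z‖ := mul_one _
  have hWlt : ‖W‖ < 1 := lt_of_le_of_lt hWabs hz
  have hWne : W ≠ 1 := by
    intro h; rw [h] at hWlt; simp at hWlt
  set K : ℂ := Complex.exp (-(((a : ℂ) + 1) * v)) * (v : ℂ) ^ (p - 1) with hK
  set L : ℕ → ℝ := fun k ↦ Real.log ((k : ℝ) + 1 + b) with hL
  have hsk : ∀ k : ℕ, (1 : ℝ) < (k : ℝ) + 1 + b := by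
    intro k
    have : (0:ℝ) ≤ (k:ℝ) := Nat.cast_nonneg k
    linarith
  have hLpos : ∀ k, 0 < L k := fun k ↦ Real.log_pos (hsk k)
  set F : ℕ → ℝ → ℂ :=
    fun k u ↦ (Ici (L k)).indicator (fun u ↦ Complex.exp (-(q * u)) * (K * W ^ k)) u with hF
  have hFint : ∀ k, IntegrableOn (F k) (Ioi 0) := fun k ↦
    ((integrableOn_cexp_neg hq 0).mul_const (K * W ^ k)).indicator measurableSet_Ici
  have hpt : ∀ u ∈ Ioi (0:ℝ),
      Complex.exp (-(q * u)) * Complex.exp (-(((a : ℂ) + 1) * v)) * (v : ℂ) ^ (p - 1) *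
        ((1 - W ^ (mCount b u)) / (1 - W)) = ∑' k, F k u := by
    intro u _
    have hmem : ∀ k : ℕ, u ∈ Ici (L k) ↔ k < mCount b u := by
      intro k
      rw [mem_Ici, hL]
      rw [Real.log_le_iff_le_exp (by linarith [hsk k])]
      exact lt_mCount_iff.symm
    rw [show (∑' k, F k u) = ∑ k ∈ Finset.range (mCount b u), F k u from
      tsum_eq_sum (fun k hk ↦ Set.indicator_of_notMem
        (fun hmem' ↦ hk (Finset.mem_range.mpr ((hmem k).mp hmem'))) _)]
    rw [Finset.sum_congr rfl
      (fun k hk ↦ Set.indicator_of_mem ((hmem k).mpr (Finset.mem_range.mp hk)) _)]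
    rw [← Finset.mul_sum, ← Finset.mul_sum, geom_sum_eq hWne]
    have hfrac : (1 - W ^ (mCount b u)) / (1 - W) = (W ^ (mCount b u) - 1) / (W - 1) := by
      rw [← neg_sub (W ^ (mCount b u)) 1, ← neg_sub W 1, neg_div_neg_eq]
    rw [hfrac, hK]
    ring
  have hC0 : Integrable (fun u : ℝ ↦ Real.exp (-q.re * u)) (volume.restrict (Ioi 0)) :=
    exp_neg_integrableOn_Ioi 0 hq
  have hFnorm : ∀ k, ∀ u : ℝ, ‖F k u‖ ≤ Real.exp (-q.re * u) * (‖K‖ * ‖z‖ ^ k) := by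
    intro k u
    refine le_trans (norm_indicator_le_norm_self _ u) ?_
    rw [norm_mul, norm_mul, norm_pow]
    have h1 : ‖Complex.exp (-(q * u))‖ = Real.exp (-q.re * u) := by
      rw [Complex.norm_exp]; congr 1; simp [Complex.mul_re]
    rw [h1]
    have h2 : ‖W‖ ≤ ‖z‖ := hWabs
    gcongr
  have hFsum : Summable fun k ↦ ∫ u in Ioi (0:ℝ), ‖F k u‖ := by
    refine Summable.of_nonneg_of_le (fun k ↦ integral_nonneg fun u ↦ norm_nonneg _)
      (fun k ↦ ?_)
      (((summable_geometric_of_lt_one (norm_nonneg z) hz).mul_left ‖K‖).mul_left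
        (∫ u in Ioi (0:ℝ), Real.exp (-q.re * u)))
    calc ∫ u in Ioi (0:ℝ), ‖F k u‖
        ≤ ∫ u in Ioi (0:ℝ), Real.exp (-q.re * u) * (‖K‖ * ‖z‖ ^ k) :=
          integral_mono ((hFint k).norm) (hC0.mul_const _) (hFnorm k)
      _ = (∫ u in Ioi (0:ℝ), Real.exp (-q.re * u)) * (‖K‖ * ‖z‖ ^ k) := by
          rw [integral_mul_const]
  have hIci : ∀ k : ℕ, Ici (L k) ∩ Ioi (0:ℝ) = Ici (L k) := fun k ↦
    inter_eq_left.mpr (fun x hx ↦ lt_of_lt_of_le (hLpos k) hx)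
  have hFval : ∀ k, (∫ u in Ioi (0:ℝ), F k u)
      = K * W ^ k * ((((k : ℝ) + 1 + b : ℝ) : ℂ) ^ (-q)) / q := by
    intro k
    rw [hF]
    rw [integral_indicator measurableSet_Ici, Measure.restrict_restrict measurableSet_Ici,
      hIci k, integral_Ici_eq_integral_Ioi, integral_mul_const, integral_cexp_neg hq (L k)]
    have hcp : (((k : ℝ) + 1 + b : ℝ) : ℂ) ^ (-q) = Complex.exp (-(q * (L k))) := by
      rw [Complex.cpow_def_of_ne_zero
        (by exact_mod_cast ne_of_gt (by linarith [hsk k] : (0:ℝ) < (k : ℝ) + 1 + b)) (-q)]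
      rw [← Complex.ofReal_log (by linarith [hsk k])]
      congr 1
      push_cast [hL]
      ring
    rw [hcp]
    ring
  rw [setIntegral_congr_fun measurableSet_Ioi hpt,
    ← integral_tsum_of_summable_integral_norm hFint hFsum]
  refine tsum_congr fun k ↦ ?_
  rw [hFval k]
  have hexp : Complex.exp (-(((a : ℂ) + 1) * v)) * (Complex.exp (-(v : ℂ))) ^ k
      = Complex.exp (-((((k : ℝ) + 1 + a : ℝ) : ℂ) * (v : ℂ))) := by
    rw [← Complex.exp_nat_mul, ← Complex.exp_add]
    congr 1
    push_cast
    ring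
  rw [hK, hW]
  rw [show Complex.exp (-(((a : ℂ) + 1) * v)) * (v : ℂ) ^ (p - 1) * (z * Complex.exp (-(v : ℂ))) ^ k
        * ((((k : ℝ) + 1 + b : ℝ) : ℂ) ^ (-q)) / q
      = z ^ k * (((k : ℝ) + 1 + b : ℝ) : ℂ) ^ (-q) / q *
        ((v : ℂ) ^ (p - 1) *
          (Complex.exp (-(((a : ℂ) + 1) * v)) * (Complex.exp (-(v : ℂ))) ^ k)) from by
    rw [mul_pow]; ring, hexp]

theorem generalized_polylog_double_integral
    (p q : ℂ) (hp : 0 < p.re) (hq : 0 < q.re)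
    (a b : ℝ) (ha : 1 < a) (hb : 1 < b) :
    (∀ u : ℝ, 0 ≤ u → mCount b u = (⌊Real.exp u - b⌋).toNat) ∧
    ∀ z : ℂ, ‖z‖ < 1 →
      genPolylog p q a b z =
        ((1 + a : ℝ) : ℂ) ^ p * ((1 + b : ℝ) : ℂ) ^ q *
          ((z * q / Complex.Gamma p) *
            ∫ v in Set.Ioi (0 : ℝ), ∫ u in Set.Ioi (0 : ℝ),
              Complex.exp (-(q * (u : ℂ))) * Complex.exp (-(((a : ℂ) + 1) * (v : ℂ))) *
                (v : ℂ) ^ (p - 1) *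
                ((1 - (z * Complex.exp (-(v : ℂ))) ^ (mCount b u)) /
                  (1 - z * Complex.exp (-(v : ℂ))))) := by
  refine ⟨fun u _ ↦ mCount_eq b u, ?_⟩
  intro z hz
  have hq0 : q ≠ 0 := by intro h; rw [h] at hq; simp at hq
  have hΓ : Complex.Gamma p ≠ 0 := by
    refine Complex.Gamma_ne_zero fun m h ↦ ?_
    rw [h] at hp
    simp only [Complex.neg_re, Complex.natCast_re] at hp
    have : (0:ℝ) ≤ (m:ℝ) := Nat.cast_nonneg m
    linarith
  have hkcast : ∀ k : ℕ, (0:ℝ) ≤ (k:ℝ) := fun k ↦ Nat.cast_nonneg k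
  set g : ℕ → ℝ → ℂ := fun k v ↦
    z ^ k * (((k : ℝ) + 1 + b : ℝ) : ℂ) ^ (-q) / q *
      ((v : ℂ) ^ (p - 1) * Complex.exp (-((((k : ℝ) + 1 + a : ℝ) : ℂ) * (v : ℂ)))) with hg
  have hra : ∀ k : ℕ, (0:ℝ) < (k : ℝ) + 1 + a := fun k ↦ by linarith [hkcast k]
  have hgint : ∀ k, Integrable (g k) (volume.restrict (Ioi 0)) := fun k ↦
    (integrableOn_cpow_mul_cexp hp (hra k)).const_mul _
  have hgval : ∀ k : ℕ, (∫ v in Ioi (0:ℝ), g k v)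
      = z ^ k * (((k : ℝ) + 1 + b : ℝ) : ℂ) ^ (-q) / q *
        ((1 / (((k : ℝ) + 1 + a : ℝ) : ℂ)) ^ p * Complex.Gamma p) := by
    intro k
    rw [hg]
    rw [integral_const_mul, Complex.integral_cpow_mul_exp_neg_mul_Ioi hp (hra k)]
  have habs : ∀ k : ℕ, ∀ v ∈ Ioi (0:ℝ), ‖g k v‖
      = (‖z‖ ^ k * ((k : ℝ) + 1 + b) ^ (-q.re) / ‖q‖) *
        (v ^ (p.re - 1) * Real.exp (-(((k : ℝ) + 1 + a) * v))) := by
    intro k v hv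
    rw [mem_Ioi] at hv
    simp only [hg]
    simp only [norm_mul, norm_div, norm_pow]
    rw [Complex.norm_cpow_eq_rpow_re_of_pos (by linarith [hkcast k] : (0:ℝ) < (k:ℝ)+1+b) (-q),
      Complex.norm_cpow_eq_rpow_re_of_pos hv (p - 1), Complex.norm_exp]
    have h1 : (-q).re = -q.re := by simp
    have h2 : (p - 1).re = p.re - 1 := by simp
    have h3 : (-((((k : ℝ) + 1 + a : ℝ) : ℂ) * (v : ℂ))).re = -(((k : ℝ) + 1 + a) * v) := by
      simp [Complex.mul_re]
    rw [h1, h2, h3]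
  have hgsum : Summable fun k ↦ ∫ v in Ioi (0:ℝ), ‖g k v‖ := by
    refine Summable.of_nonneg_of_le (fun k ↦ integral_nonneg fun v ↦ norm_nonneg _)
      (fun k ↦ ?_)
      ((summable_geometric_of_lt_one (norm_nonneg z) hz).mul_left
        (Real.Gamma p.re / ‖q‖))
    calc ∫ v in Ioi (0:ℝ), ‖g k v‖
        = (‖z‖ ^ k * ((k : ℝ) + 1 + b) ^ (-q.re) / ‖q‖) *
          ((1 / ((k : ℝ) + 1 + a)) ^ p.re * Real.Gamma p.re) := by
          rw [setIntegral_congr_fun measurableSet_Ioi (habs k), integral_const_mul,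
            Real.integral_rpow_mul_exp_neg_mul_Ioi hp (hra k)]
      _ ≤ (‖z‖ ^ k * 1 / ‖q‖) * (1 * Real.Gamma p.re) := by
          have hb1 : ((k : ℝ) + 1 + b) ^ (-q.re) ≤ 1 :=
            Real.rpow_le_one_of_one_le_of_nonpos (by linarith [hkcast k]) (by linarith)
          have hb2 : (1 / ((k : ℝ) + 1 + a)) ^ p.re ≤ 1 :=
            Real.rpow_le_one (by positivity)
              (by rw [div_le_one (hra k)]; linarith [hkcast k]) hp.le
          have hb3 : 0 < ‖q‖ := by
            simpa using norm_pos_iff.mpr hq0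
          have hb4 : 0 ≤ Real.Gamma p.re := (Real.Gamma_pos_of_pos hp).le
          gcongr
      _ = Real.Gamma p.re / ‖q‖ * ‖z‖ ^ k := by ring
  have houter : (∫ v in Ioi (0:ℝ), ∫ u in Ioi (0:ℝ),
        Complex.exp (-(q * (u : ℂ))) * Complex.exp (-(((a : ℂ) + 1) * (v : ℂ))) *
          (v : ℂ) ^ (p - 1) *
          ((1 - (z * Complex.exp (-(v : ℂ))) ^ (mCount b u)) /
            (1 - z * Complex.exp (-(v : ℂ)))))
      = ∫ v in Ioi (0:ℝ), ∑' k, g k v :=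
    setIntegral_congr_fun measurableSet_Ioi
      (fun v hv ↦ step_inner p q hq a b ha hb z hz v hv)
  rw [houter, ← integral_tsum_of_summable_integral_norm hgint hgsum,
    show (∑' k : ℕ, ∫ v in Ioi (0:ℝ), g k v)
      = ∑' k : ℕ, z ^ k * (((k : ℝ) + 1 + b : ℝ) : ℂ) ^ (-q) / q *
          ((1 / (((k : ℝ) + 1 + a : ℝ) : ℂ)) ^ p * Complex.Gamma p) from tsum_congr hgval,
    ← tsum_mul_left, ← tsum_mul_left, genPolylog]
  refine tsum_congr fun k ↦ ?_
  have hRne : (((k : ℝ) + 1 + a : ℝ) : ℂ) ^ p ≠ 0 := by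
    rw [Ne, Complex.cpow_eq_zero_iff]
    push_neg
    intro h
    exact absurd (Complex.ofReal_eq_zero.mp h) (hra k).ne'
  have hSne : (((k : ℝ) + 1 + b : ℝ) : ℂ) ^ q ≠ 0 := by
    rw [Ne, Complex.cpow_eq_zero_iff]
    push_neg
    intro h
    exact absurd (Complex.ofReal_eq_zero.mp h) (by linarith [hkcast k] : (0:ℝ) < (k:ℝ)+1+b).ne'
  have hinv : (1 / (((k : ℝ) + 1 + a : ℝ) : ℂ)) ^ p = ((((k : ℝ) + 1 + a : ℝ) : ℂ) ^ p)⁻¹ := by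
    rw [one_div, Complex.inv_cpow]
    rw [Complex.arg_ofReal_of_nonneg (hra k).le]
    exact Real.pi_ne_zero.symm
  rw [hinv, Complex.cpow_neg]
  linear_combination
    (-(((1 + a : ℝ) : ℂ) ^ p * ((1 + b : ℝ) : ℂ) ^ q * z ^ (k + 1) *
        (((((k:ℝ) + 1 + a) : ℝ) : ℂ) ^ p)⁻¹ * (((((k:ℝ) + 1 + b) : ℝ) : ℂ) ^ q)⁻¹)) *
      mul_inv_cancel₀ hq0 +
    (-(((1 + a : ℝ) : ℂ) ^ p * ((1 + b : ℝ) : ℂ) ^ q * z ^ (k + 1) *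
        (((((k:ℝ) + 1 + a) : ℝ) : ℂ) ^ p)⁻¹ * (((((k:ℝ) + 1 + b) : ℝ) : ℂ) ^ q)⁻¹) * q * q⁻¹) *
      mul_inv_cancel₀ hΓ
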